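/- Let p be a prime, f ≥ 1, and k a finite field with q = p^f elements. There exists a two-variable integer polynomial P₁ ∈ ℤ[x,y] whose degree in each of the two variables is at most p^{f−1}(p−1), such that for all a, b ∈ k, in the ring 𝕎 k of p-typical Witt vectors one has teichmuller(a) + teichmuller(b) ≡ teichmuller(a+b) + p · teichmuller(P₁(a,b)) (mod p² 𝕎 k), where P₁(a,b) ∈ k denotes the evaluation of P₁ at (a,b) under the canonical map ℤ[x,y] → k[x,y]. -/

import Mathlib

open WittVector MvPolynomial Finset

variable (p : ℕ) [hp : Fact p.Prime]

/-- The universal first carry polynomial. -/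
private noncomputable def SP : MvPolynomial (Fin 2) ℤ :=
  (teichmuller p (X 0 : MvPolynomial (Fin 2) ℤ) + teichmuller p (X 1)
    - teichmuller p (X 0 + X 1)).coeff 1

private lemma ghost_zero {R : Type*} [CommRing R] (x : WittVector p R) :
    ghostComponent 0 x = x.coeff 0 := by
  rw [ghostComponent_apply, wittPolynomial_zero, aeval_X]

private lemma ghost_one {R : Type*} [CommRing R] (x : WittVector p R) :
    ghostComponent 1 x = x.coeff 0 ^ p + p * x.coeff 1 := by
  rw [ghostComponent_apply, wittPolynomial_one]
  simp [add_comm]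

private lemma SP_coeff_zero :
    (teichmuller p (X 0 : MvPolynomial (Fin 2) ℤ) + teichmuller p (X 1)
      - teichmuller p (X 0 + X 1)).coeff 0 = 0 := by
  rw [← ghost_zero]
  simp only [map_sub, map_add, ghostComponent_teichmuller, pow_zero, pow_one]
  ring

private lemma p_mul_SP :
    ((p : MvPolynomial (Fin 2) ℤ)) * SP p
      = -(∑ i ∈ Finset.Ioo 0 p, (X 0 : MvPolynomial (Fin 2) ℤ) ^ i * X 1 ^ (p - i)
          * (p.choose i : MvPolynomial (Fin 2) ℤ)) := by
  have hg : ghostComponent 1 (teichmuller p (X 0 : MvPolynomial (Fin 2) ℤ) + teichmuller p (X 1)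
      - teichmuller p (X 0 + X 1))
      = (X 0 : MvPolynomial (Fin 2) ℤ) ^ p + X 1 ^ p - (X 0 + X 1) ^ p := by
    simp only [map_sub, map_add, ghostComponent_teichmuller, pow_one]
  rw [ghost_one, SP_coeff_zero] at hg
  rw [zero_pow hp.out.ne_zero, zero_add] at hg
  rw [SP, hg]
  have hr : Finset.range (p + 1) = insert 0 (insert p (Finset.Ioo 0 p)) := by
    ext i
    simp only [Finset.mem_range, Finset.mem_insert, Finset.mem_Ioo]
    omega
  have h0 : (0:ℕ) ∉ insert p (Finset.Ioo 0 p) := by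
    simp only [Finset.mem_insert, Finset.mem_Ioo]
    have := hp.out.pos
    omega
  have hpn : p ∉ Finset.Ioo 0 p := by simp
  rw [add_pow, hr, Finset.sum_insert h0, Finset.sum_insert hpn]
  simp only [pow_zero, one_mul, Nat.sub_zero, Nat.choose_zero_right, Nat.cast_one, mul_one,
    Nat.sub_self, Nat.choose_self]
  ring

private lemma degreeOf_SP (j : Fin 2) : degreeOf j (SP p) ≤ p - 1 := by
  have hT : degreeOf j (∑ i ∈ Finset.Ioo 0 p,
      (X 0 : MvPolynomial (Fin 2) ℤ) ^ i * X 1 ^ (p - i) * (p.choose i : MvPolynomial (Fin 2) ℤ))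
      ≤ p - 1 := by
    refine Finset.sum_induction _ (fun q => degreeOf j q ≤ p - 1) (fun q r hq hr => ?_)
      (by simp) ?_
    · exact le_trans (degreeOf_add_le _ _ _) (max_le hq hr)
    · intro i hi
      simp only [Finset.mem_Ioo] at hi
      calc degreeOf j ((X 0 : MvPolynomial (Fin 2) ℤ) ^ i * X 1 ^ (p - i) * (p.choose i : MvPolynomial (Fin 2) ℤ))
          ≤ degreeOf j ((X 0 : MvPolynomial (Fin 2) ℤ) ^ i * X 1 ^ (p - i))
            + degreeOf j ((p.choose i : MvPolynomial (Fin 2) ℤ)) := degreeOf_mul_le _ _ _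
        _ ≤ degreeOf j ((X 0 : MvPolynomial (Fin 2) ℤ) ^ i)
            + degreeOf j ((X 1 : MvPolynomial (Fin 2) ℤ) ^ (p - i)) + 0 := by
            rw [← map_natCast (C : ℤ →+* MvPolynomial (Fin 2) ℤ), degreeOf_C]
            exact Nat.add_le_add_right (degreeOf_mul_le _ _ _) 0
        _ ≤ i * degreeOf j (X 0 : MvPolynomial (Fin 2) ℤ)
            + (p - i) * degreeOf j (X 1 : MvPolynomial (Fin 2) ℤ) + 0 :=
            Nat.add_le_add_right (add_le_add (degreeOf_pow_le _ _ _) (degreeOf_pow_le _ _ _)) 0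
        _ ≤ p - 1 := by
            fin_cases j <;> simp only [degreeOf_X] <;> norm_num <;> omega
  rw [degreeOf_le_iff]
  intro m hm
  have hm' : m ∈ (∑ i ∈ Finset.Ioo 0 p,
      (X 0 : MvPolynomial (Fin 2) ℤ) ^ i * X 1 ^ (p - i)
        * (p.choose i : MvPolynomial (Fin 2) ℤ)).support := by
    rw [MvPolynomial.mem_support_iff]
    have : MvPolynomial.coeff m (((p : MvPolynomial (Fin 2) ℤ)) * SP p) ≠ 0 := by
      rw [← map_natCast (C : ℤ →+* MvPolynomial (Fin 2) ℤ), MvPolynomial.coeff_C_mul]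
      exact mul_ne_zero (by exact_mod_cast hp.out.ne_zero) (MvPolynomial.mem_support_iff.mp hm)
    rw [p_mul_SP, MvPolynomial.coeff_neg, neg_ne_zero] at this
    exact this
  exact degreeOf_le_iff.mp hT m hm'

private lemma exists_verschiebung {R : Type*} [CommRing R] (x : WittVector p R)
    (h : x.coeff 0 = 0) :
    ∃ z : WittVector p R, verschiebung z = x ∧ z.coeff 0 = x.coeff 1 := by
  refine ⟨WittVector.mk p (fun n => x.coeff (n + 1)), ?_, by simp [WittVector.coeff_mk]⟩
  ext n
  cases n with
  | zero => rw [verschiebung_coeff_zero, h]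
  | succ n => rw [verschiebung_coeff_succ]; simp [WittVector.coeff_mk]


/-- Let `p` be a prime, `f ≥ 1`, and `k` a finite field with `q = p^f` elements. There is
a two-variable integer polynomial `P₁` of degree at most `p^{f-1}(p-1)` in each variable
such that for all `a b ∈ k`,
`teichmuller a + teichmuller b ≡ teichmuller (a+b) + p • teichmuller (P₁(a,b)) (mod p² 𝕎 k)`. -/
theorem teichmuller_add_mod_p_squared (p f : ℕ) [hp : Fact p.Prime] (hf : 1 ≤ f)
    (k : Type*) [Field k] [Fintype k] (hcard : Fintype.card k = p ^ f) :
    ∃ P₁ : MvPolynomial (Fin 2) ℤ,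
      MvPolynomial.degreeOf 0 P₁ ≤ p ^ (f - 1) * (p - 1) ∧
      MvPolynomial.degreeOf 1 P₁ ≤ p ^ (f - 1) * (p - 1) ∧
      ∀ a b : k,
        WittVector.teichmuller p a + WittVector.teichmuller p b -
          (WittVector.teichmuller p (a + b) +
            (p : WittVector p k) *
              WittVector.teichmuller p (MvPolynomial.aeval ![a, b] P₁))
          ∈ Ideal.span {((p : WittVector p k)) ^ 2} := by
  classical
  have hp2 := hp.out
  -- the characteristic of `k` is `p`
  obtain ⟨n, hcp', hcn⟩ := FiniteField.card k (ringChar k)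
  have hpchar : p = ringChar k := by
    have hdvd : p ∣ ringChar k ^ (n : ℕ) := by
      rw [← hcn, hcard]
      exact dvd_pow_self p (by omega)
    exact (Nat.prime_dvd_prime_iff_eq hp2 hcp').mp (hp2.dvd_of_dvd_pow hdvd)
  haveI : CharP k p := by rw [hpchar]; exact ringChar.charP k
  refine ⟨SP p ^ p ^ (f - 1),
    (degreeOf_pow_le _ _ _).trans (Nat.mul_le_mul_left _ (degreeOf_SP p 0)),
    (degreeOf_pow_le _ _ _).trans (Nat.mul_le_mul_left _ (degreeOf_SP p 1)), ?_⟩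
  intro a b
  set g : MvPolynomial (Fin 2) ℤ →+* k := (MvPolynomial.aeval ![a, b] : _ →ₐ[ℤ] k).toRingHom
    with hg
  set s : k := g (SP p) with hs
  set c : k := g (SP p ^ p ^ (f - 1)) with hc
  have hcs : c = s ^ p ^ (f - 1) := by rw [hc, map_pow, hs]
  have hcp : c ^ p = s := by
    rw [hcs, ← pow_mul]
    have hm : p ^ (f - 1) * p = p ^ f := by
      rw [← pow_succ]
      congr 1
      omega
    rw [hm, ← hcard, FiniteField.pow_card]
  set Dk : WittVector p k := WittVector.teichmuller p a + WittVector.teichmuller p b -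
    WittVector.teichmuller p (a + b) with hDk
  have hmap : WittVector.map g (teichmuller p (X 0 : MvPolynomial (Fin 2) ℤ) + teichmuller p (X 1)
      - teichmuller p (X 0 + X 1)) = Dk := by
    rw [map_sub, map_add, WittVector.map_teichmuller, WittVector.map_teichmuller,
      WittVector.map_teichmuller, map_add]
    simp [hg, hDk]
  have hDk0 : Dk.coeff 0 = 0 := by
    rw [← hmap, WittVector.map_coeff, SP_coeff_zero, map_zero]
  have hDk1 : Dk.coeff 1 = s := by
    rw [← hmap, WittVector.map_coeff, hs, SP]
  obtain ⟨z, hz, hz0⟩ := exists_verschiebung p Dk hDk0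
  -- `p * τ c = V (τ s)`
  have hF : frobenius (teichmuller p c) = teichmuller p s := by
    ext m
    rw [coeff_frobenius_charP]
    cases m with
    | zero => rw [teichmuller_coeff_zero, teichmuller_coeff_zero, hcp]
    | succ m =>
        rw [teichmuller_coeff_pos p _ _ (Nat.succ_pos m),
          teichmuller_coeff_pos p _ _ (Nat.succ_pos m), zero_pow hp2.ne_zero]
  have hptc : (p : WittVector p k) * teichmuller p c = verschiebung (teichmuller p s) := by
    rw [mul_comm, ← hF, verschiebung_frobenius]
  have hw0 : (z - teichmuller p s).coeff 0 = 0 := by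
    have hsub : ∀ x y : WittVector p k, (x - y).coeff 0 = x.coeff 0 - y.coeff 0 := by
      intro x y
      rw [← ghost_zero, ← ghost_zero, ← ghost_zero, map_sub]
    rw [hsub, hz0, hDk1, teichmuller_coeff_zero, sub_self]
  obtain ⟨u, hu, -⟩ := exists_verschiebung p _ hw0
  set y : WittVector p k := (frobeniusEquiv p k).symm ((frobeniusEquiv p k).symm u) with hy
  have hfe : ∀ x : WittVector p k, frobenius ((frobeniusEquiv p k).symm x) = x := by
    intro x
    have h := (frobeniusEquiv p k).apply_symm_apply x
    rwa [WittVector.frobeniusEquiv_apply] at h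
  have h1 : ∀ x : WittVector p k, (p : WittVector p k) * x = verschiebung (frobenius x) := by
    intro x
    rw [verschiebung_frobenius, mul_comm]
  have hkey : WittVector.teichmuller p a + WittVector.teichmuller p b -
      (WittVector.teichmuller p (a + b) +
        (p : WittVector p k) * WittVector.teichmuller p (MvPolynomial.aeval ![a, b]
          (SP p ^ p ^ (f - 1))))
      = verschiebung (verschiebung u) := by
    have h2 : (MvPolynomial.aeval ![a, b] (SP p ^ p ^ (f - 1)) : k) = c := rfl
    have h3 : WittVector.teichmuller p a + WittVector.teichmuller p b -
        (WittVector.teichmuller p (a + b) +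
          (p : WittVector p k) * WittVector.teichmuller p c)
        = Dk - (p : WittVector p k) * teichmuller p c := by
      rw [hDk]; ring
    rw [h2, h3, hptc, ← hz,
      ← map_sub (verschiebung : WittVector p k →+ WittVector p k) z (teichmuller p s), ← hu]
  rw [hkey, Ideal.mem_span_singleton]
  refine ⟨y, ?_⟩
  calc verschiebung (verschiebung u)
      = verschiebung (verschiebung (frobenius (frobenius y))) := by rw [hfe, hfe]
    _ = verschiebung (frobenius (verschiebung (frobenius y))) := by
        rw [verschiebung_frobenius_comm (frobenius y)]
    _ = (p : WittVector p k) * ((p : WittVector p k) * y) := by rw [← h1, ← h1]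
    _ = (p : WittVector p k) ^ 2 * y := by ring
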